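/- For any word u ∈ A*, the shape of the P-symbol of u (the pair (T_L, T_R) computed by the Baxter insertion algorithm) is a pair of twin binary trees, i.e., the canopies of the shapes of T_L and T_R are complementary. -/

import Mathlib

open scoped Classical

/-- Baxter adjacency relations on words over the alphabet of natural numbers. -/
def BaxterAdj (w w' : List ℕ) : Prop :=
  (∃ (a b c d : ℕ) (u v : List ℕ), a ≤ b ∧ b < c ∧ c ≤ d ∧
      w = c :: (u ++ a :: d :: (v ++ [b])) ∧ w' = c :: (u ++ d :: a :: (v ++ [b]))) ∨
  (∃ (a b c d : ℕ) (u v : List ℕ), a < b ∧ b ≤ c ∧ c < d ∧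
      w = b :: (u ++ d :: a :: (v ++ [c])) ∧ w' = b :: (u ++ a :: d :: (v ++ [c])))

/-- One rewriting step: an adjacency applied inside a word (congruence context). -/
def BaxterStep (w w' : List ℕ) : Prop :=
  ∃ (p s u v : List ℕ), BaxterAdj u v ∧ w = p ++ u ++ s ∧ w' = p ++ v ++ s

/-- The Baxter congruence: the equivalence generated by the Baxter steps. -/
def BaxterEquiv : List ℕ → List ℕ → Prop := Relation.EqvGen BaxterStep

/-- Sylvester adjacency: a c u b ≡ c a u b when a ≤ b < c. -/
def SylvAdj (w w' : List ℕ) : Prop :=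
  ∃ (a b c : ℕ) (u : List ℕ), a ≤ b ∧ b < c ∧
    w = a :: c :: (u ++ [b]) ∧ w' = c :: a :: (u ++ [b])

def SylvStep (w w' : List ℕ) : Prop :=
  ∃ (p s u v : List ℕ), SylvAdj u v ∧ w = p ++ u ++ s ∧ w' = p ++ v ++ s

def SylvEquiv : List ℕ → List ℕ → Prop := Relation.EqvGen SylvStep

/-- #-sylvester adjacency: b u a c ≡ b u c a when a < b ≤ c. -/
def SylvHAdj (w w' : List ℕ) : Prop :=
  ∃ (a b c : ℕ) (u : List ℕ), a < b ∧ b ≤ c ∧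
    w = b :: (u ++ [a, c]) ∧ w' = b :: (u ++ [c, a])

def SylvHStep (w w' : List ℕ) : Prop :=
  ∃ (p s u v : List ℕ), SylvHAdj u v ∧ w = p ++ u ++ s ∧ w' = p ++ v ++ s

def SylvHEquiv : List ℕ → List ℕ → Prop := Relation.EqvGen SylvHStep

/-- The standardized word of `u`: position `i` receives the rank of the letter `u i`
(ties broken from left to right), ranks starting at `1`. -/
def std (u : List ℕ) : List ℕ :=
  (List.range u.length).map fun i =>
    ((List.range u.length).filter fun j =>
      decide (u.getD j 0 < u.getD i 0 ∨ (u.getD j 0 = u.getD i 0 ∧ j < i))).length + 1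

/-- The maximal letter of a word. -/
def wordMax (u : List ℕ) : ℕ := u.foldr max 0

/-- The Schützenberger transformation: reverse and complement each letter w.r.t. max + 1. -/
def schutz (u : List ℕ) : List ℕ := u.reverse.map fun x => wordMax u + 1 - x

/-- Labeled binary trees. -/
inductive BT where
  | leaf : BT
  | node : BT → ℕ → BT → BT
deriving DecidableEq

/-- Leaf insertion into a left binary search tree. -/
def leafInsL : BT → ℕ → BT
  | .leaf, a => .node .leaf a .leaf
  | .node l b r, a => if a < b then .node (leafInsL l a) b r else .node l b (leafInsL r a)

/-- Leaf insertion into a right binary search tree. -/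
def leafInsR : BT → ℕ → BT
  | .leaf, a => .node .leaf a .leaf
  | .node l b r, a => if a ≤ b then .node (leafInsR l a) b r else .node l b (leafInsR r a)

/-- The lower restricted tree `T_{≤ a}` of a right binary search tree. -/
def splitLE : BT → ℕ → BT
  | .leaf, _ => .leaf
  | .node l b r, a => if b ≤ a then .node l b (splitLE r a) else splitLE l a

/-- The higher restricted tree `T_{> a}` of a right binary search tree. -/
def splitGT : BT → ℕ → BT
  | .leaf, _ => .leaf
  | .node l b r, a => if b ≤ a then splitGT r a else .node (splitGT l a) b r

/-- Root insertion into a right binary search tree. -/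
def rootIns (t : BT) (a : ℕ) : BT := .node (splitLE t a) a (splitGT t a)

/-- The left tree of the P-symbol: leaf insertions from left to right. -/
def insL (u : List ℕ) : BT := u.foldl leafInsL .leaf

/-- The right tree of the P-symbol: root insertions from left to right. -/
def insR (u : List ℕ) : BT := u.foldl rootIns .leaf

/-- The P-symbol of a word. -/
def Psymb (u : List ℕ) : BT × BT := (insL u, insR u)

/-- Unlabeled binary trees. -/
inductive UBT where
  | leaf : UBT
  | node : UBT → UBT → UBT
deriving DecidableEq

/-- The shape of a labeled binary tree. -/
def shape : BT → UBT
  | .leaf => .leaf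
  | .node l _ r => .node (shape l) (shape r)

/-- The shape of the P-symbol of a word. -/
def Pshape (u : List ℕ) : UBT × UBT := (shape (insL u), shape (insR u))

/-- Number of internal nodes. -/
def sizeU : UBT → ℕ
  | .leaf => 0
  | .node l r => sizeU l + sizeU r + 1

/-- Orientations of the leaves, from left to right: `true` means right-oriented
(the leaf is the right child of its parent); the parameter is the orientation
assigned if the tree is reduced to a leaf. -/
def loU : UBT → Bool → List Bool
  | .leaf, b => [b]
  | .node l r, _ => loU l false ++ loU r true

/-- Leaf orientations of a labeled binary tree. -/
def loB : BT → Bool → List Bool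
  | .leaf, b => [b]
  | .node l _ r, _ => loB l false ++ loB r true

/-- The canopy: orientations of the leaves except the first and the last one. -/
def canU (t : UBT) : List Bool := ((loU t false).drop 1).dropLast

/-- A pair of twin binary trees: same number of nodes and complementary canopies. -/
def IsTwin (J : UBT × UBT) : Prop :=
  sizeU J.1 = sizeU J.2 ∧ (canU J.1).length = (canU J.2).length ∧
    ∀ i < (canU J.1).length, (canU J.1).getD i false ≠ (canU J.2).getD i false

/-- `σ` is (the word of) a permutation of `{1, …, n}`. -/
def IsPerm (n : ℕ) (σ : List ℕ) : Prop := σ.Perm (List.range' 1 n)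

/-- Covering-type step of the right permutohedron (weak) order: exchange of two
adjacent letters `a < b`. -/
def PermutoStep (σ ν : List ℕ) : Prop :=
  ∃ (p s : List ℕ) (a b : ℕ), a < b ∧ σ = p ++ a :: b :: s ∧ ν = p ++ b :: a :: s

/-- The right permutohedron (weak) order. -/
def PermutoLe : List ℕ → List ℕ → Prop := Relation.ReflTransGen PermutoStep

/-- Baxter permutations: avoiding the generalized patterns 2-41-3 and 3-14-2. -/
def IsBaxterPerm (σ : List ℕ) : Prop :=
  ∀ i j k, i < j → j + 1 < k → k < σ.length →
    ¬(σ.getD (j+1) 0 < σ.getD i 0 ∧ σ.getD i 0 < σ.getD k 0 ∧ σ.getD k 0 < σ.getD j 0) ∧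
    ¬(σ.getD j 0 < σ.getD k 0 ∧ σ.getD k 0 < σ.getD i 0 ∧ σ.getD i 0 < σ.getD (j+1) 0)

namespace TwinAux

/-- Inorder list of labels of a labeled binary tree. -/
def labels : BT → List ℕ
  | .leaf => []
  | .node l x r => labels l ++ x :: labels r

/-- Left binary search tree invariant. -/
def BSTL : BT → Prop
  | .leaf => True
  | .node l x r => (∀ y ∈ labels l, y < x) ∧ (∀ y ∈ labels r, x ≤ y) ∧ BSTL l ∧ BSTL r

/-- Right binary search tree invariant. -/
def BSTR : BT → Prop
  | .leaf => True
  | .node l x r => (∀ y ∈ labels l, y ≤ x) ∧ (∀ y ∈ labels r, x < y) ∧ BSTR l ∧ BSTR r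

/-- Number of labels `≤ a`. -/
def cnt (t : BT) (a : ℕ) : ℕ := (labels t).countP (fun x => decide (x ≤ a))

lemma labels_eq_nil {t : BT} (h : labels t = []) : t = .leaf := by
  cases t with
  | leaf => rfl
  | node l x r => simp [labels] at h

lemma length_loB (t : BT) (b : Bool) : (loB t b).length = (labels t).length + 1 := by
  induction t generalizing b with
  | leaf => simp [loB, labels]
  | node l x r ihl ihr => simp [loB, labels, ihl, ihr]; omega

lemma loB_param {t : BT} (h : t ≠ .leaf) (b b' : Bool) : loB t b = loB t b' := by
  cases t with
  | leaf => simp at h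
  | node l x r => rfl

lemma cnt_le_length (t : BT) (a : ℕ) : cnt t a ≤ (labels t).length :=
  List.countP_le_length

lemma cnt_node (l r : BT) (c a : ℕ) :
    cnt (.node l c r) a = cnt l a + ((if c ≤ a then 1 else 0) + cnt r a) := by
  by_cases h : c ≤ a <;>
    simp [cnt, labels, List.countP_append, List.countP_cons, h] <;> omega

lemma cnt_pos_ne_leaf {t : BT} {a : ℕ} (h : 1 ≤ cnt t a) : t ≠ .leaf := by
  intro he; subst he; simp [cnt, labels] at h

lemma loB_leafInsL {t : BT} (ht : BSTL t) (a : ℕ) (b : Bool) :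
    loB (leafInsL t a) b =
      (loB t b).take (cnt t a) ++ false :: true :: (loB t b).drop (cnt t a + 1) := by
  induction t generalizing b with
  | leaf => simp [leafInsL, loB, cnt, labels]
  | node l c r ihl ihr =>
    obtain ⟨hl, hr, hLl, hLr⟩ := ht
    by_cases hac : a < c
    · have hcr : cnt r a = 0 := by
        rw [cnt, List.countP_eq_zero]
        intro y hy; have := hr y hy; simp; omega
      have hm : cnt (.node l c r) a = cnt l a := by
        rw [cnt_node, if_neg (by omega), hcr]; omega
      have hml : cnt l a ≤ (labels l).length := cnt_le_length l a
      have hlen : (loB l false).length = (labels l).length + 1 := length_loB l false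
      rw [leafInsL, if_pos hac, hm]
      show loB (leafInsL l a) false ++ loB r true = _
      rw [ihl hLl]
      show _ = (loB l false ++ loB r true).take (cnt l a) ++
        false :: true :: (loB l false ++ loB r true).drop (cnt l a + 1)
      rw [List.take_append_of_le_length (by omega),
        List.drop_append_of_le_length (by omega)]
      simp
    · have hca : c ≤ a := by omega
      have hcl : cnt l a = (labels l).length := by
        rw [cnt, List.countP_eq_length]
        intro y hy; have := hl y hy; simp; omega
      have hm : cnt (.node l c r) a = (labels l).length + 1 + cnt r a := by
        rw [cnt_node, if_pos hca, hcl]; omega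
      have hlen : (loB l false).length = (labels l).length + 1 := length_loB l false
      rw [leafInsL, if_neg hac, hm]
      show loB l false ++ loB (leafInsL r a) true = _
      rw [ihr hLr]
      show _ = (loB l false ++ loB r true).take ((labels l).length + 1 + cnt r a) ++
        false :: true :: (loB l false ++ loB r true).drop ((labels l).length + 1 + cnt r a + 1)
      rw [show (labels l).length + 1 + cnt r a = (loB l false).length + cnt r a by omega,
        List.take_length_add_append,
        show (loB l false).length + cnt r a + 1 = (loB l false).length + (cnt r a + 1) by omega,
        List.drop_length_add_append]
      simp

lemma labels_splitLE {t : BT} (ht : BSTR t) (a : ℕ) :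
    labels (splitLE t a) = (labels t).filter (fun x => decide (x ≤ a)) := by
  induction t with
  | leaf => simp [splitLE, labels]
  | node l c r ihl ihr =>
    obtain ⟨hl, hr, hRl, hRr⟩ := ht
    by_cases hca : c ≤ a
    · have hfl : (labels l).filter (fun x => decide (x ≤ a)) = labels l := by
        rw [List.filter_eq_self]
        intro y hy; have := hl y hy; simp; omega
      rw [splitLE, if_pos hca, labels, labels, List.filter_append, hfl,
        List.filter_cons_of_pos (by simp [hca]), ihr hRr]
    · have hfr : (labels r).filter (fun x => decide (x ≤ a)) = [] := by
        rw [List.filter_eq_nil_iff]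
        intro y hy; have := hr y hy; simp; omega
      rw [splitLE, if_neg hca, labels, List.filter_append,
        List.filter_cons_of_neg (by simp; omega), hfr, ihl hRl, List.append_nil]

lemma labels_splitGT {t : BT} (ht : BSTR t) (a : ℕ) :
    labels (splitGT t a) = (labels t).filter (fun x => !(decide (x ≤ a))) := by
  induction t with
  | leaf => simp [splitGT, labels]
  | node l c r ihl ihr =>
    obtain ⟨hl, hr, hRl, hRr⟩ := ht
    by_cases hca : c ≤ a
    · have hfl : (labels l).filter (fun x => !(decide (x ≤ a))) = [] := by
        rw [List.filter_eq_nil_iff]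
        intro y hy; have := hl y hy; simp; omega
      rw [splitGT, if_pos hca, labels, List.filter_append, hfl,
        List.filter_cons_of_neg (by simp [hca]), ihr hRr, List.nil_append]
    · have hfr : (labels r).filter (fun x => !(decide (x ≤ a))) = labels r := by
        rw [List.filter_eq_self]
        intro y hy; have := hr y hy; simp; omega
      rw [splitGT, if_neg hca, labels, labels, List.filter_append,
        List.filter_cons_of_pos (by simp; omega), hfr, ihl hRl]

lemma splitLE_eq_leaf {t : BT} (ht : BSTR t) {a : ℕ} (h : cnt t a = 0) :
    splitLE t a = .leaf := by
  apply labels_eq_nil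
  rw [labels_splitLE ht, ← List.length_eq_zero_iff, ← List.countP_eq_length_filter]
  exact h

lemma splitGT_eq_leaf {t : BT} (ht : BSTR t) {a : ℕ} (h : cnt t a = (labels t).length) :
    splitGT t a = .leaf := by
  apply labels_eq_nil
  rw [labels_splitGT ht, ← List.length_eq_zero_iff, ← List.countP_eq_length_filter,
    List.countP_eq_zero]
  intro y hy
  rw [cnt] at h
  have := List.countP_eq_length.mp h y hy
  simp at this ⊢
  omega

lemma BSTR_splitLE {t : BT} (ht : BSTR t) (a : ℕ) : BSTR (splitLE t a) := by
  induction t with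
  | leaf => exact trivial
  | node l c r ihl ihr =>
    obtain ⟨hl, hr, hRl, hRr⟩ := ht
    by_cases hca : c ≤ a
    · rw [splitLE, if_pos hca]
      refine ⟨hl, ?_, hRl, ihr hRr⟩
      intro y hy
      rw [labels_splitLE hRr] at hy
      exact hr y (List.mem_of_mem_filter hy)
    · rw [splitLE, if_neg hca]; exact ihl hRl

lemma BSTR_splitGT {t : BT} (ht : BSTR t) (a : ℕ) : BSTR (splitGT t a) := by
  induction t with
  | leaf => exact trivial
  | node l c r ihl ihr =>
    obtain ⟨hl, hr, hRl, hRr⟩ := ht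
    by_cases hca : c ≤ a
    · rw [splitGT, if_pos hca]; exact ihr hRr
    · rw [splitGT, if_neg hca]
      refine ⟨?_, hr, ihl hRl, hRr⟩
      intro y hy
      rw [labels_splitGT hRl] at hy
      exact hl y (List.mem_of_mem_filter hy)

lemma BSTR_rootIns {t : BT} (ht : BSTR t) (a : ℕ) : BSTR (rootIns t a) := by
  refine ⟨?_, ?_, BSTR_splitLE ht a, BSTR_splitGT ht a⟩
  · intro y hy
    rw [labels_splitLE ht] at hy
    have := List.of_mem_filter hy
    simpa using this
  · intro y hy
    rw [labels_splitGT ht] at hy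
    have := List.of_mem_filter hy
    simp at this; omega

lemma labels_rootIns_perm {t : BT} (ht : BSTR t) (a : ℕ) :
    (labels (rootIns t a)).Perm (a :: labels t) := by
  show (labels (splitLE t a) ++ a :: labels (splitGT t a)).Perm _
  refine List.perm_middle.trans (List.Perm.cons a ?_)
  rw [labels_splitLE ht, labels_splitGT ht]
  exact List.filter_append_perm _ _

lemma labels_leafInsL (t : BT) (a : ℕ) : (labels (leafInsL t a)).Perm (a :: labels t) := by
  induction t with
  | leaf => simp [leafInsL, labels]
  | node l c r ihl ihr =>
    by_cases hac : a < c
    · rw [leafInsL, if_pos hac, labels, labels]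
      exact ihl.append_right _
    · rw [leafInsL, if_neg hac, labels, labels]
      refine (List.Perm.append_left (labels l) (List.Perm.cons c ihr)).trans ?_
      refine (List.Perm.append_left (labels l) ?_).trans List.perm_middle
      exact List.Perm.swap a c (labels r)

lemma BSTL_leafInsL {t : BT} (ht : BSTL t) (a : ℕ) : BSTL (leafInsL t a) := by
  induction t with
  | leaf => exact ⟨by simp [labels], by simp [labels], trivial, trivial⟩
  | node l c r ihl ihr =>
    obtain ⟨hl, hr, hLl, hLr⟩ := ht
    by_cases hac : a < c
    · rw [leafInsL, if_pos hac]
      refine ⟨?_, hr, ihl hLl, hLr⟩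
      intro y hy
      rcases List.mem_cons.mp ((labels_leafInsL l a).mem_iff.mp hy) with h | h
      · omega
      · exact hl y h
    · rw [leafInsL, if_neg hac]
      refine ⟨hl, ?_, hLl, ihr hLr⟩
      intro y hy
      rcases List.mem_cons.mp ((labels_leafInsL r a).mem_iff.mp hy) with h | h
      · omega
      · exact hr y h

lemma loB_splitLE {t : BT} (ht : BSTR t) {a : ℕ} (b : Bool) (hm : 1 ≤ cnt t a) :
    loB (splitLE t a) b = (loB t b).take (cnt t a) ++ [true] := by
  induction t generalizing b with
  | leaf => simp [cnt, labels] at hm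
  | node l c r ihl ihr =>
    obtain ⟨hl, hr, hRl, hRr⟩ := ht
    have hlen : (loB l false).length = (labels l).length + 1 := length_loB l false
    by_cases hca : c ≤ a
    · have hcl : cnt l a = (labels l).length := by
        rw [cnt, List.countP_eq_length]
        intro y hy; have := hl y hy; simp; omega
      have hm' : cnt (.node l c r) a = (labels l).length + 1 + cnt r a := by
        rw [cnt_node, if_pos hca, hcl]; omega
      rw [splitLE, if_pos hca, hm']
      show loB l false ++ loB (splitLE r a) true = _
      by_cases hmr : 1 ≤ cnt r a
      · rw [ihr hRr true hmr]
        show _ = (loB l false ++ loB r true).take ((labels l).length + 1 + cnt r a) ++ [true]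
        rw [show (labels l).length + 1 + cnt r a = (loB l false).length + cnt r a by omega,
          List.take_append]
        simp
      · have h0 : cnt r a = 0 := by omega
        rw [splitLE_eq_leaf hRr h0]
        show loB l false ++ [true] = _
        rw [h0]
        show _ = (loB l false ++ loB r true).take ((labels l).length + 1 + 0) ++ [true]
        rw [show (labels l).length + 1 + 0 = (loB l false).length + 0 by omega,
          List.take_append]
        simp
    · have hcr : cnt r a = 0 := by
        rw [cnt, List.countP_eq_zero]
        intro y hy; have := hr y hy; simp; omega
      have hm' : cnt (.node l c r) a = cnt l a := by
        rw [cnt_node, if_neg hca, hcr]; omega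
      rw [splitLE, if_neg hca, hm']
      have hlne : l ≠ .leaf := cnt_pos_ne_leaf (by omega : 1 ≤ cnt l a)
      rw [ihl hRl b (by omega)]
      show _ = (loB l false ++ loB r true).take (cnt l a) ++ [true]
      rw [List.take_append_of_le_length (by have := cnt_le_length l a; omega),
        loB_param hlne b false]

lemma loB_splitGT {t : BT} (ht : BSTR t) {a : ℕ} (b : Bool)
    (hm : cnt t a < (labels t).length) :
    loB (splitGT t a) b = false :: (loB t b).drop (cnt t a + 1) := by
  induction t generalizing b with
  | leaf => simp [cnt, labels] at hm
  | node l c r ihl ihr =>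
    obtain ⟨hl, hr, hRl, hRr⟩ := ht
    have hlen : (loB l false).length = (labels l).length + 1 := length_loB l false
    have hcll : cnt l a ≤ (labels l).length := cnt_le_length l a
    have hcrl : cnt r a ≤ (labels r).length := cnt_le_length r a
    have hlab : (labels (BT.node l c r)).length = (labels l).length + 1 + (labels r).length := by
      simp [labels]; omega
    by_cases hca : c ≤ a
    · have hcl : cnt l a = (labels l).length := by
        rw [cnt, List.countP_eq_length]
        intro y hy; have := hl y hy; simp; omega
      have hm' : cnt (.node l c r) a = (labels l).length + 1 + cnt r a := by
        rw [cnt_node, if_pos hca, hcl]; omega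
      have hmr : cnt r a < (labels r).length := by
        rw [hm'] at hm; omega
      have hrne : r ≠ .leaf := by
        intro he; subst he; simp [cnt, labels] at hmr
      rw [splitGT, if_pos hca, hm', ihr hRr b hmr]
      show false :: (loB r b).drop (cnt r a + 1) = _
      show _ = false :: (loB l false ++ loB r true).drop ((labels l).length + 1 + cnt r a + 1)
      rw [show (labels l).length + 1 + cnt r a + 1 = (loB l false).length + (cnt r a + 1) by omega,
        List.drop_length_add_append, loB_param hrne b true]
    · have hcr : cnt r a = 0 := by
        rw [cnt, List.countP_eq_zero]
        intro y hy; have := hr y hy; simp; omega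
      have hm' : cnt (.node l c r) a = cnt l a := by
        rw [cnt_node, if_neg hca, hcr]; omega
      rw [splitGT, if_neg hca, hm']
      by_cases hml : cnt l a < (labels l).length
      · show loB (splitGT l a) false ++ loB r true = _
        rw [ihl hRl false hml]
        show _ = false :: (loB l false ++ loB r true).drop (cnt l a + 1)
        rw [List.drop_append_of_le_length (by omega)]
        simp
      · have h0 : cnt l a = (labels l).length := by omega
        rw [splitGT_eq_leaf hRl h0]
        show loB .leaf false ++ loB r true = _
        show _ = false :: (loB l false ++ loB r true).drop (cnt l a + 1)
        rw [show cnt l a + 1 = (loB l false).length + 0 by omega, List.drop_append]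
        simp [loB]

lemma loB_rootIns {t : BT} (ht : BSTR t) (a : ℕ) (b : Bool) :
    loB (rootIns t a) b =
      (loB t b).take (cnt t a) ++ (if cnt t a = 0 then false else true) ::
        (if cnt t a = (labels t).length then true else false) ::
        (loB t b).drop (cnt t a + 1) := by
  have hle := cnt_le_length t a
  show loB (splitLE t a) false ++ loB (splitGT t a) true = _
  by_cases h0 : cnt t a = 0
  · rw [splitLE_eq_leaf ht h0, h0]
    by_cases hn : (0 : ℕ) = (labels t).length
    · have hleaf : t = .leaf := labels_eq_nil (List.length_eq_zero_iff.mp hn.symm)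
      subst hleaf
      simp [splitGT, loB, labels, cnt]
    · rw [loB_splitGT ht true (by omega), if_neg hn]
      have htne : t ≠ .leaf := by
        intro he; subst he; simp [labels] at hn
      simp [loB, loB_param htne true b]
      rw [h0]
      simp [List.drop_one]
  · rw [loB_splitLE ht false (by omega), if_neg h0]
    by_cases hn : cnt t a = (labels t).length
    · rw [splitGT_eq_leaf ht hn, if_pos hn]
      have hdrop : (loB t b).drop (cnt t a + 1) = [] := by
        rw [List.drop_eq_nil_iff, length_loB]; omega
      have htne : t ≠ .leaf := cnt_pos_ne_leaf (a := a) (by omega)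
      rw [hdrop, loB_param htne false b]
      simp [loB]
    · rw [loB_splitGT ht true (by omega), if_neg hn]
      have htne : t ≠ .leaf := cnt_pos_ne_leaf (a := a) (by omega)
      rw [loB_param htne false b, loB_param htne true b]
      simp

lemma getD_surgery (L : List Bool) (m i : ℕ) (x y d : Bool) (hm : m ≤ L.length) :
    (L.take m ++ x :: y :: L.drop (m + 1)).getD i d =
      if i < m then L.getD i d else if i = m then x else if i = m + 1 then y
      else L.getD (i - 1) d := by
  have hlen : (L.take m).length = m := by simp [List.length_take]; omega
  by_cases h1 : i < m
  · rw [List.getD_append _ _ _ _ (by omega), if_pos h1]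
    simp [List.getD_eq_getElem?_getD, List.getElem?_take, h1]
  · have hble : (L.take m).length ≤ i := by rw [hlen]; omega
    rw [List.getD_append_right _ _ _ _ hble, hlen, if_neg h1]
    by_cases h2 : i = m
    · subst h2; simp
    · by_cases h3 : i = m + 1
      · have h4 : i - m = 1 := by omega
        rw [h4, if_neg h2, if_pos h3]
        simp
      · obtain ⟨k, hk⟩ : ∃ k, i - m = k + 2 := ⟨i - m - 2, by omega⟩
        rw [hk, if_neg h2, if_neg h3]
        show (L.drop (m + 1)).getD k d = L.getD (i - 1) d
        rw [List.getD_eq_getElem?_getD, List.getElem?_drop, ← List.getD_eq_getElem?_getD,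
          show m + 1 + k = i - 1 by omega]

lemma length_surgery (L : List Bool) (m : ℕ) (x y : Bool) (hm : m < L.length) :
    (L.take m ++ x :: y :: L.drop (m + 1)).length = L.length + 1 := by
  simp only [List.length_append, List.length_cons, List.length_take, List.length_drop,
    min_eq_left (le_of_lt hm)]
  omega

/-- The invariant: both leaf-orientation words have length `n+1`, start with
`false`, end with `true`, and are complementary in between. -/
def Inv (n : ℕ) (L R : List Bool) : Prop :=
  L.length = n + 1 ∧ R.length = n + 1 ∧
  ∀ i ≤ n, (if i = 0 then L.getD i false = false ∧ R.getD i false = false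
    else if i = n then L.getD i false = true ∧ R.getD i false = true
    else L.getD i false = !R.getD i false)

lemma Inv_step {n m : ℕ} {L R : List Bool} (h : Inv n L R) (hm : m ≤ n) :
    Inv (n + 1) (L.take m ++ false :: true :: L.drop (m + 1))
      (R.take m ++ (if m = 0 then false else true) ::
        (if m = n then true else false) :: R.drop (m + 1)) := by
  obtain ⟨hL, hR, hI⟩ := h
  refine ⟨by rw [length_surgery _ _ _ _ (by omega), hL],
    by rw [length_surgery _ _ _ _ (by omega), hR], ?_⟩
  intro i hi
  rw [getD_surgery _ _ _ _ _ _ (by omega), getD_surgery _ _ _ _ _ _ (by omega)]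
  by_cases h1 : i < m
  · have h2 := hI i (by omega)
    rw [if_pos h1, if_pos h1]
    by_cases h0 : i = 0
    · rw [if_pos h0]; rw [if_pos h0] at h2; exact h2
    · rw [if_neg h0, if_neg (show i ≠ n + 1 by omega)]
      rw [if_neg h0, if_neg (show i ≠ n by omega)] at h2
      exact h2
  · by_cases h2 : i = m
    · rw [if_neg h1, if_pos h2, if_neg h1, if_pos h2]
      by_cases h0 : i = 0
      · rw [if_pos h0, if_pos (by omega : m = 0)]; exact ⟨rfl, rfl⟩
      · rw [if_neg h0, if_neg (show i ≠ n + 1 by omega), if_neg (by omega : ¬ m = 0)]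
        rfl
    · by_cases h3 : i = m + 1
      · rw [if_neg h1, if_neg h2, if_pos h3, if_neg h1, if_neg h2, if_pos h3]
        rw [if_neg (show i ≠ 0 by omega)]
        by_cases hn : i = n + 1
        · rw [if_pos hn, if_pos (by omega : m = n)]; exact ⟨rfl, rfl⟩
        · rw [if_neg hn, if_neg (by omega : ¬ m = n)]; rfl
      · rw [if_neg h1, if_neg h2, if_neg h3, if_neg h1, if_neg h2, if_neg h3]
        have h4 := hI (i - 1) (by omega)
        rw [if_neg (show i - 1 ≠ 0 by omega)] at h4
        rw [if_neg (show i ≠ 0 by omega)]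
        by_cases hn : i = n + 1
        · rw [if_pos hn]
          rw [if_pos (show i - 1 = n by omega)] at h4
          exact h4
        · rw [if_neg hn]
          rw [if_neg (show i - 1 ≠ n by omega)] at h4
          exact h4

lemma main (u : List ℕ) :
    BSTL (insL u) ∧ BSTR (insR u) ∧ (labels (insL u)).Perm u ∧ (labels (insR u)).Perm u ∧
      Inv u.length (loB (insL u) false) (loB (insR u) false) := by
  induction u using List.reverseRecOn with
  | nil =>
    refine ⟨trivial, trivial, List.Perm.refl _, List.Perm.refl _, rfl, rfl, ?_⟩
    intro i hi
    have h0 : i = 0 := Nat.le_zero.mp (by simpa using hi)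
    subst h0
    simp [insL, insR, loB]
  | append_singleton w a ih =>
    obtain ⟨hbl, hbr, hpl, hpr, hinv⟩ := ih
    have eL : insL (w ++ [a]) = leafInsL (insL w) a := by simp [insL]
    have eR : insR (w ++ [a]) = rootIns (insR w) a := by simp [insR]
    have hm2 : cnt (insR w) a = cnt (insL w) a :=
      List.Perm.countP_eq _ (hpr.trans hpl.symm)
    have hlenL : (labels (insL w)).length = w.length := hpl.length_eq
    have hlenR : (labels (insR w)).length = w.length := hpr.length_eq
    have hmle : cnt (insL w) a ≤ w.length := by
      have := cnt_le_length (insL w) a; omega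
    refine ⟨?_, ?_, ?_, ?_, ?_⟩
    · rw [eL]; exact BSTL_leafInsL hbl a
    · rw [eR]; exact BSTR_rootIns hbr a
    · rw [eL]
      exact (labels_leafInsL (insL w) a).trans (hpl.cons a |>.trans
        (List.perm_append_singleton a w).symm)
    · rw [eR]
      exact (labels_rootIns_perm hbr a).trans (hpr.cons a |>.trans
        (List.perm_append_singleton a w).symm)
    · rw [eL, eR, loB_leafInsL hbl a false, loB_rootIns hbr a false, hm2, hlenR,
        List.length_append, List.length_singleton]
      exact Inv_step hinv hmle

lemma loU_shape (t : BT) (b : Bool) : loU (shape t) b = loB t b := by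
  induction t generalizing b with
  | leaf => rfl
  | node l x r ihl ihr => simp [shape, loU, loB, ihl, ihr]

lemma sizeU_shape (t : BT) : sizeU (shape t) = (labels t).length := by
  induction t with
  | leaf => rfl
  | node l x r ihl ihr => simp [shape, sizeU, labels, ihl, ihr]; omega

lemma getD_interior (L : List Bool) (i : ℕ) (hi : i + 2 < L.length) :
    ((L.drop 1).dropLast).getD i false = L.getD (i + 1) false := by
  have h1 : i < ((L.drop 1).dropLast).length := by
    simp [List.length_dropLast, List.length_drop]; omega
  have h2 : i < (L.drop 1).length := by
    simp [List.length_drop]; omega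
  have h3 : i + 1 < L.length := by omega
  rw [List.getD_eq_getElem?_getD, List.getElem?_eq_getElem h1]
  rw [List.getD_eq_getElem?_getD, List.getElem?_eq_getElem h3]
  simp only [Option.getD_some]
  rw [List.getElem_dropLast]
  simp [List.getElem_drop]

end TwinAux

/-- the shape of the P-symbol of any word is a pair of twin
binary trees. -/
theorem Pshape_isTwin (u : List ℕ) : IsTwin (Pshape u) := by
  classical
  obtain ⟨hbl, hbr, hpl, hpr, hLlen, hRlen, hI⟩ := TwinAux.main u
  set n := u.length with hn
  have hlenL : (TwinAux.labels (insL u)).length = n := hpl.length_eq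
  have hlenR : (TwinAux.labels (insR u)).length = n := hpr.length_eq
  have hcanL : canU (Pshape u).1 = ((loB (insL u) false).drop 1).dropLast := by
    show canU (shape (insL u)) = _
    rw [canU, TwinAux.loU_shape]
  have hcanR : canU (Pshape u).2 = ((loB (insR u) false).drop 1).dropLast := by
    show canU (shape (insR u)) = _
    rw [canU, TwinAux.loU_shape]
  refine ⟨?_, ?_, ?_⟩
  · show sizeU (shape (insL u)) = sizeU (shape (insR u))
    rw [TwinAux.sizeU_shape, TwinAux.sizeU_shape, hlenL, hlenR]
  · rw [hcanL, hcanR]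
    simp [List.length_dropLast, List.length_drop, hLlen, hRlen]
  · intro i hi
    have hilen : i < n - 1 := by
      rw [hcanL] at hi
      simp [List.length_dropLast, List.length_drop, hLlen] at hi
      omega
    rw [hcanL, hcanR, TwinAux.getD_interior _ _ (by omega),
      TwinAux.getD_interior _ _ (by omega)]
    have h := hI (i + 1) (by omega)
    rw [if_neg (by omega : ¬ i + 1 = 0), if_neg (by omega : ¬ i + 1 = n)] at h
    rw [h]
    exact Bool.not_ne_self _
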